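/- Let p, q ≥ 1, let τ be a faithful probability Radon measure on [0,1], and let σ be a faithful diffuse probability Radon measure on [0,1]. Then there exists an injective unital *-homomorphism φ : Z_{p,q} → Z_{p,q} such that ∫ tr(φ(f)(t)) dσ(t) = ∫ tr(f(t)) dτ(t) for all f ∈ Z_{p,q}. -/

import Mathlib

open MeasureTheory
open scoped ENNReal

noncomputable section

/-- The unit interval `[0,1]` as a type. -/
abbrev 𝕀 : Type := unitInterval

/-- A measure on `[0,1]` is *faithful* if it assigns positive measure to every
nonempty (relatively) open subset. -/
def Faithful (μ : Measure 𝕀) : Prop :=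
  ∀ U : Set 𝕀, IsOpen U → U.Nonempty → 0 < μ U

/-- A measure on `[0,1]` is *diffuse* (atomless) if every singleton has measure zero. -/
def Diffuse (μ : Measure 𝕀) : Prop :=
  ∀ t : 𝕀, μ {t} = 0

open scoped Matrix.Norms.L2Operator ComplexOrder

/-- `n × n` complex matrices. -/
abbrev Mat (n : ℕ) : Type := Matrix (Fin n) (Fin n) ℂ

/-- The C*-algebra `𝔸 n = C([0,1], Mₙ(ℂ))` of continuous matrix-valued functions. -/
abbrev 𝔸 (n : ℕ) : Type := C(𝕀, Mat n)

/-- The tracial state on `𝔸 n` induced by the measure `μ` on `[0,1]`: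
`f ↦ ∫ tr(f t) dμ(t)`, where `tr` is the normalized trace on `Mₙ(ℂ)`. -/
def trInt (n : ℕ) (μ : Measure 𝕀) (f : 𝔸 n) : ℂ :=
  ∫ t, (f t).trace / (n : ℂ) ∂μ

open scoped Kronecker

/-- Evaluation at a point, as a star algebra homomorphism `𝔸 n →⋆ₐ[ℂ] Mat n`. -/
def evalHom (n : ℕ) (t : 𝕀) : 𝔸 n →⋆ₐ[ℂ] Mat n :=
  { toFun := fun f => f t
    map_one' := rfl
    map_mul' := fun _ _ => rfl
    map_zero' := rfl
    map_add' := fun _ _ => rfl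
    commutes' := fun _ => rfl
    map_star' := fun _ => rfl }

/-- `a ↦ a ⊗ 1`, with indices identified via `finProdFinEquiv : Fin p × Fin q ≃ Fin (p*q)`. -/
def lKronFun (p q : ℕ) (a : Mat p) : Mat (p * q) :=
  (a ⊗ₖ (1 : Mat q)).submatrix (⇑finProdFinEquiv.symm) (⇑finProdFinEquiv.symm)

/-- `b ↦ 1 ⊗ b`, with indices identified via `finProdFinEquiv : Fin p × Fin q ≃ Fin (p*q)`. -/
def rKronFun (p q : ℕ) (b : Mat q) : Mat (p * q) :=
  ((1 : Mat p) ⊗ₖ b).submatrix (⇑finProdFinEquiv.symm) (⇑finProdFinEquiv.symm)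

lemma lKronFun_one (p q : ℕ) : lKronFun p q 1 = 1 := by
  unfold lKronFun; rw [Matrix.one_kronecker_one, Matrix.submatrix_one_equiv]

lemma rKronFun_one (p q : ℕ) : rKronFun p q 1 = 1 := by
  unfold rKronFun; rw [Matrix.one_kronecker_one, Matrix.submatrix_one_equiv]

lemma lKronFun_mul (p q : ℕ) (a b : Mat p) :
    lKronFun p q (a * b) = lKronFun p q a * lKronFun p q b := by
  unfold lKronFun
  rw [Matrix.submatrix_mul_equiv _ _ _ finProdFinEquiv.symm _, ← Matrix.mul_kronecker_mul,
    one_mul]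

lemma rKronFun_mul (p q : ℕ) (a b : Mat q) :
    rKronFun p q (a * b) = rKronFun p q a * rKronFun p q b := by
  unfold rKronFun
  rw [Matrix.submatrix_mul_equiv _ _ _ finProdFinEquiv.symm _, ← Matrix.mul_kronecker_mul,
    one_mul]

lemma lKronFun_add (p q : ℕ) (a b : Mat p) :
    lKronFun p q (a + b) = lKronFun p q a + lKronFun p q b := by
  unfold lKronFun; rw [Matrix.add_kronecker, Matrix.submatrix_add]; rfl

lemma rKronFun_add (p q : ℕ) (a b : Mat q) :
    rKronFun p q (a + b) = rKronFun p q a + rKronFun p q b := by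
  unfold rKronFun; rw [Matrix.kronecker_add, Matrix.submatrix_add]; rfl

lemma lKronFun_smul (p q : ℕ) (c : ℂ) (a : Mat p) :
    lKronFun p q (c • a) = c • lKronFun p q a := by
  unfold lKronFun; rw [Matrix.smul_kronecker, Matrix.submatrix_smul]; rfl

lemma rKronFun_smul (p q : ℕ) (c : ℂ) (b : Mat q) :
    rKronFun p q (c • b) = c • rKronFun p q b := by
  unfold rKronFun; rw [Matrix.kronecker_smul, Matrix.submatrix_smul]; rfl

lemma lKronFun_star (p q : ℕ) (a : Mat p) :
    lKronFun p q (star a) = star (lKronFun p q a) := by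
  ext x y
  simp [lKronFun, Matrix.submatrix_apply, Matrix.star_apply, Matrix.kroneckerMap_apply,
    Matrix.one_apply, star_mul', apply_ite, eq_comm]
  split_ifs with h <;> tauto

lemma rKronFun_star (p q : ℕ) (b : Mat q) :
    rKronFun p q (star b) = star (rKronFun p q b) := by
  ext x y
  simp [rKronFun, Matrix.submatrix_apply, Matrix.star_apply, Matrix.kroneckerMap_apply,
    Matrix.one_apply, star_mul', apply_ite, eq_comm]
  split_ifs with h <;> tauto

/-- The unital star-algebra embedding `M_p(ℂ) → M_{pq}(ℂ)`, `a ↦ a ⊗ 1`. -/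
def lKron (p q : ℕ) : Mat p →⋆ₐ[ℂ] Mat (p * q) :=
  { toFun := lKronFun p q
    map_one' := lKronFun_one p q
    map_mul' := lKronFun_mul p q
    map_zero' := by
      show lKronFun p q 0 = 0
      have := lKronFun_smul p q 0 1; simpa using this
    map_add' := lKronFun_add p q
    commutes' := fun c => by
      show lKronFun p q (algebraMap ℂ (Mat p) c) = algebraMap ℂ (Mat (p * q)) c
      rw [Algebra.algebraMap_eq_smul_one, Algebra.algebraMap_eq_smul_one,
        lKronFun_smul, lKronFun_one]
    map_star' := fun a => by
      show lKronFun p q (star a) = star (lKronFun p q a)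
      exact lKronFun_star p q a }

/-- The unital star-algebra embedding `M_q(ℂ) → M_{pq}(ℂ)`, `b ↦ 1 ⊗ b`. -/
def rKron (p q : ℕ) : Mat q →⋆ₐ[ℂ] Mat (p * q) :=
  { toFun := rKronFun p q
    map_one' := rKronFun_one p q
    map_mul' := rKronFun_mul p q
    map_zero' := by
      show rKronFun p q 0 = 0
      have := rKronFun_smul p q 0 1; simpa using this
    map_add' := rKronFun_add p q
    commutes' := fun c => by
      show rKronFun p q (algebraMap ℂ (Mat q) c) = algebraMap ℂ (Mat (p * q)) c
      rw [Algebra.algebraMap_eq_smul_one, Algebra.algebraMap_eq_smul_one,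
        rKronFun_smul, rKronFun_one]
    map_star' := fun b => by
      show rKronFun p q (star b) = star (rKronFun p q b)
      exact rKronFun_star p q b }

/-- The dimension drop algebra `Z_{p,q}`: the star subalgebra of `C([0,1], M_{pq}(ℂ))`
consisting of those `f` with `f 0 ∈ M_p(ℂ) ⊗ 1` and `f 1 ∈ 1 ⊗ M_q(ℂ)`. -/
def Zpq (p q : ℕ) : StarSubalgebra ℂ (𝔸 (p * q)) :=
  ((lKron p q).range.comap (evalHom (p * q) 0)) ⊓
    ((rKron p q).range.comap (evalHom (p * q) 1))

/-- `mult k ξ s t` is the number of indices `i` with `ξ i s = t`. -/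
def mult (k : ℕ) (ξ : Fin k → C(𝕀, 𝕀)) (s t : 𝕀) : ℕ :=
  Set.ncard {i : Fin k | ξ i s = t}


namespace S12
open Set

/-- preimage of `Iic x` under the inclusion `𝕀 → ℝ`. -/
def preIic (x : ℝ) : Set 𝕀 := {t : 𝕀 | (t : ℝ) ≤ x}

lemma measurableSet_preIic (x : ℝ) : MeasurableSet (preIic x) :=
  measurable_subtype_coe measurableSet_Iic

variable (μ : Measure 𝕀) [IsProbabilityMeasure μ]

/-- The (real-valued) CDF of `μ`. -/
def Fr (x : ℝ) : ℝ := (μ (preIic x)).toReal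

lemma Fr_nonneg (x : ℝ) : 0 ≤ Fr μ x := ENNReal.toReal_nonneg

lemma Fr_le_one (x : ℝ) : Fr μ x ≤ 1 := by
  have h : μ (preIic x) ≤ μ univ := measure_mono (subset_univ _)
  have := ENNReal.toReal_mono (by simp) h
  simpa [Fr] using this

lemma Fr_mono : Monotone (Fr μ) := fun x y h =>
  ENNReal.toReal_mono (measure_ne_top μ _) (measure_mono fun t ht => le_trans ht h)

lemma ofReal_Fr (x : ℝ) : ENNReal.ofReal (Fr μ x) = μ (preIic x) :=
  ENNReal.ofReal_toReal (measure_ne_top _ _)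

lemma Fr_one : Fr μ 1 = 1 := by
  have h : preIic 1 = univ := eq_univ_of_forall fun t => t.2.2
  rw [Fr, h, measure_univ, ENNReal.toReal_one]

lemma Fr_zero (hd : Diffuse μ) : Fr μ 0 = 0 := by
  have h : preIic 0 ⊆ {(0 : 𝕀)} := fun t ht => by
    have : (t : ℝ) = 0 := le_antisymm ht t.2.1
    simp [Subtype.ext_iff, this]
  have := measure_mono h (μ := μ)
  rw [hd 0] at this
  simp [Fr, le_antisymm this zero_le]

/-- Right continuity packaged: lower bounds on the CDF pass to `sInf`. -/
lemma le_measure_preIic_sInf {S : Set ℝ} (hne : S.Nonempty) (hbd : BddBelow S)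
    {c : ℝ≥0∞} (hc : ∀ x ∈ S, c ≤ μ (preIic x)) : c ≤ μ (preIic (sInf S)) := by
  obtain ⟨u, hu_anti, hu_tend, hu_mem⟩ := exists_seq_tendsto_sInf hne hbd
  have hset : preIic (sInf S) = ⋂ n, preIic (u n) := by
    ext t
    simp only [preIic, mem_setOf_eq, mem_iInter]
    constructor
    · intro h n; exact h.trans (csInf_le hbd (hu_mem n))
    · intro h; exact ge_of_tendsto hu_tend (Filter.Eventually.of_forall h)
  have hdir : Directed (fun x1 x2 : Set 𝕀 => x1 ⊇ x2) (fun n => preIic (u n)) := by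
    have hanti : Antitone (fun n => preIic (u n)) := fun m n hmn t ht =>
      le_trans ht (hu_anti hmn)
    exact hanti.directed_ge
  rw [hset, Directed.measure_iInter (fun n => (measurableSet_preIic _).nullMeasurableSet)
    hdir ⟨0, measure_ne_top μ _⟩]
  exact le_iInf fun n => hc _ (hu_mem n)

/-- Left continuity (diffuse case): upper bounds on the CDF pass to `sSup`. -/
lemma measure_preIic_sSup_le (hd : Diffuse μ) {S : Set ℝ} (hne : S.Nonempty)
    (hbd : BddAbove S) {c : ℝ≥0∞} (hc : ∀ x ∈ S, μ (preIic x) ≤ c) :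
    μ (preIic (sSup S)) ≤ c := by
  obtain ⟨u, hu_mono, hu_tend, hu_mem⟩ := exists_seq_tendsto_sSup hne hbd
  have hzero : μ {t : 𝕀 | (t : ℝ) = sSup S} = 0 := by
    by_cases h : ∃ t0 : 𝕀, (t0 : ℝ) = sSup S
    · obtain ⟨t0, ht0⟩ := h
      have : {t : 𝕀 | (t : ℝ) = sSup S} = {t0} := by
        ext t; simp [Subtype.ext_iff, ht0]
      rw [this]; exact hd t0
    · have : {t : 𝕀 | (t : ℝ) = sSup S} = ∅ := by
        ext t; simp only [mem_setOf_eq, mem_empty_iff_false, iff_false]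
        exact fun ht => h ⟨t, ht⟩
      simp [this]
  have hsub : preIic (sSup S) ⊆ {t : 𝕀 | (t : ℝ) = sSup S} ∪ ⋃ n, preIic (u n) := by
    intro t ht
    have ht' : (t : ℝ) ≤ sSup S := ht
    rcases ht'.lt_or_eq with h | h
    swap
    · exact Or.inl h
    · right
      have : ∀ᶠ n in Filter.atTop, (t : ℝ) < u n := hu_tend.eventually (eventually_gt_nhds h)
      obtain ⟨n, hn⟩ := this.exists
      exact mem_iUnion.2 ⟨n, le_of_lt hn⟩
  calc μ (preIic (sSup S)) ≤ μ ({t : 𝕀 | (t : ℝ) = sSup S} ∪ ⋃ n, preIic (u n)) :=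
        measure_mono hsub
    _ ≤ μ {t : 𝕀 | (t : ℝ) = sSup S} + μ (⋃ n, preIic (u n)) := measure_union_le _ _
    _ = μ (⋃ n, preIic (u n)) := by rw [hzero, zero_add]
    _ ≤ c := by
        have hdir : Directed (fun x1 x2 : Set 𝕀 => x1 ⊆ x2) (fun n => preIic (u n)) :=
          (Monotone.directed_le (fun m n hmn t ht => le_trans ht (hu_mono hmn)))
        rw [Directed.measure_iUnion hdir]
        exact iSup_le fun n => hc _ (hu_mem n)


/-- Key surjectivity lemma for a diffuse CDF. -/
lemma exists_Fr_eq (hd : Diffuse μ) {v : ℝ} (h0 : 0 ≤ v) (h1 : v ≤ 1) :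
    ∃ t0 ∈ Icc (0:ℝ) 1, Fr μ t0 = v ∧ μ {s : 𝕀 | Fr μ (s : ℝ) ≤ v} = ENNReal.ofReal v := by
  set T := {x : ℝ | x ∈ Icc (0:ℝ) 1 ∧ Fr μ x ≤ v} with hT
  have h0T : (0:ℝ) ∈ T := ⟨⟨le_refl _, zero_le_one⟩, by rw [Fr_zero μ hd]; exact h0⟩
  have hbdT : BddAbove T := ⟨1, fun x hx => hx.1.2⟩
  set t0 := sSup T with ht0def
  have ht00 : 0 ≤ t0 := le_csSup hbdT h0T
  have ht01 : t0 ≤ 1 := csSup_le ⟨0, h0T⟩ fun x hx => hx.1.2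
  have hstepa : μ (preIic t0) ≤ ENNReal.ofReal v := by
    apply measure_preIic_sSup_le μ hd ⟨0, h0T⟩ hbdT
    intro x hx
    rw [← ofReal_Fr]
    exact ENNReal.ofReal_le_ofReal hx.2
  have hstepb : ENNReal.ofReal v ≤ μ (preIic t0) := by
    rcases ht01.lt_or_eq with ht0lt | ht0eq
    · have hSI : sInf (Ioc t0 1) = t0 := csInf_Ioc ht0lt
      rw [← hSI]
      apply le_measure_preIic_sInf μ (nonempty_Ioc.2 ht0lt) ⟨t0, fun x hx => le_of_lt hx.1⟩
      intro x hx
      have hxT : x ∉ T := fun hmem => absurd (le_csSup hbdT hmem) (not_le.2 hx.1)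
      have hxIcc : x ∈ Icc (0:ℝ) 1 := ⟨le_trans ht00 (le_of_lt hx.1), hx.2⟩
      have : v ≤ Fr μ x := le_of_not_ge fun hle => hxT ⟨hxIcc, hle⟩
      rw [← ofReal_Fr]
      exact ENNReal.ofReal_le_ofReal this
    · have : preIic t0 = univ := eq_univ_of_forall fun t => ht0eq ▸ t.2.2
      rw [this, measure_univ]
      exact ENNReal.ofReal_le_of_le_toReal (by simpa using h1)
  have hval : μ (preIic t0) = ENNReal.ofReal v := le_antisymm hstepa hstepb
  have hFt0 : Fr μ t0 = v := by
    rw [Fr, hval, ENNReal.toReal_ofReal h0]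
  refine ⟨t0, ⟨ht00, ht01⟩, hFt0, ?_⟩
  have hseteq : {s : 𝕀 | Fr μ (s : ℝ) ≤ v} = preIic t0 := by
    ext s
    simp only [mem_setOf_eq, preIic]
    constructor
    · intro h; exact le_csSup hbdT ⟨s.2, h⟩
    · intro h; exact le_trans (Fr_mono μ h) hFt0.le
  rw [hseteq, hval]

/-- Strict monotonicity of the CDF of a faithful measure. -/
lemma Fr_strictMonoOn (hf : Faithful μ) : StrictMonoOn (Fr μ) (Icc (0:ℝ) 1) := by
  intro x hx y hy hxy
  set U : Set 𝕀 := Subtype.val ⁻¹' Ioo x y with hU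
  have hUopen : IsOpen U := isOpen_Ioo.preimage continuous_subtype_val
  have hUne : U.Nonempty := by
    obtain ⟨z, hz⟩ := exists_between hxy
    exact ⟨⟨z, ⟨le_trans hx.1 hz.1.le, le_trans hz.2.le hy.2⟩⟩, hz⟩
  have hUpos : 0 < μ U := hf U hUopen hUne
  have hdisj : Disjoint (preIic x) U := by
    rw [disjoint_left]
    intro t ht htU
    exact absurd htU.1 (not_lt.2 ht)
  have hsub : preIic x ∪ U ⊆ preIic y := by
    rintro t (ht | ht)
    · exact le_trans ht hxy.le
    · exact ht.2.le
  have hm : μ (preIic x) + μ U ≤ μ (preIic y) := by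
    rw [← measure_union hdisj (hUopen.measurableSet)]
    exact measure_mono hsub
  have hfin1 : μ (preIic x) ≠ ⊤ := measure_ne_top μ _
  have hfin2 : μ U ≠ ⊤ := measure_ne_top μ _
  have : Fr μ x + (μ U).toReal ≤ Fr μ y := by
    rw [Fr, Fr, ← ENNReal.toReal_add hfin1 hfin2]
    exact ENNReal.toReal_mono (measure_ne_top μ _) hm
  have hpos : 0 < (μ U).toReal := ENNReal.toReal_pos hUpos.ne' hfin2
  linarith

variable (τ : Measure 𝕀) [IsProbabilityMeasure τ]

/-- The set defining the quantile function. -/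
def Sq (u : ℝ) : Set ℝ := {x | x ∈ Icc (0:ℝ) 1 ∧ u ≤ Fr τ x}

/-- The quantile function of `τ`. -/
def Gr (u : ℝ) : ℝ := sInf (Sq τ u)

lemma one_mem_Sq {u : ℝ} (hu : u ≤ 1) : (1:ℝ) ∈ Sq τ u :=
  ⟨⟨zero_le_one, le_refl _⟩, by rw [Fr_one]; exact hu⟩

lemma bddBelow_Sq (u : ℝ) : BddBelow (Sq τ u) := ⟨0, fun x hx => hx.1.1⟩

lemma Gr_nonneg {u : ℝ} (hu : u ≤ 1) : 0 ≤ Gr τ u :=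
  le_csInf ⟨1, one_mem_Sq τ hu⟩ fun x hx => hx.1.1

lemma Gr_le_one {u : ℝ} (hu : u ≤ 1) : Gr τ u ≤ 1 :=
  csInf_le (bddBelow_Sq τ u) (one_mem_Sq τ hu)

lemma le_Fr_Gr {u : ℝ} (hu : u ≤ 1) : u ≤ Fr τ (Gr τ u) := by
  have h : ENNReal.ofReal u ≤ τ (preIic (Gr τ u)) := by
    apply le_measure_preIic_sInf τ ⟨1, one_mem_Sq τ hu⟩ (bddBelow_Sq τ u)
    intro x hx
    rw [← ofReal_Fr]
    exact ENNReal.ofReal_le_ofReal hx.2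
  rw [← ofReal_Fr] at h
  exact (ENNReal.ofReal_le_ofReal_iff (Fr_nonneg τ _)).1 h

lemma Gr_le_iff {u t : ℝ} (hu : u ≤ 1) (ht : t ∈ Icc (0:ℝ) 1) :
    Gr τ u ≤ t ↔ u ≤ Fr τ t :=
  ⟨fun h => (le_Fr_Gr τ hu).trans (Fr_mono τ h), fun h => csInf_le (bddBelow_Sq τ u) ⟨ht, h⟩⟩

lemma Gr_mono {u u' : ℝ} (hu' : u' ≤ 1) (h : u ≤ u') : Gr τ u ≤ Gr τ u' :=
  csInf_le_csInf (bddBelow_Sq τ u) ⟨1, one_mem_Sq τ hu'⟩ (fun x hx => ⟨hx.1, le_trans h hx.2⟩)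

lemma Gr_Fr (hf : Faithful τ) (t : 𝕀) : Gr τ (Fr τ (t:ℝ)) = (t:ℝ) := by
  refine le_antisymm (csInf_le (bddBelow_Sq τ _) ⟨t.2, le_refl _⟩) ?_
  refine le_csInf ⟨1, one_mem_Sq τ (Fr_le_one τ _)⟩ fun x hx => ?_
  by_contra hlt
  push_neg at hlt
  exact absurd hx.2 (not_le.2 (Fr_strictMonoOn τ hf hx.1 t.2 hlt))

lemma Gr_zero : Gr τ 0 = 0 :=
  le_antisymm (csInf_le (bddBelow_Sq τ 0) ⟨⟨le_refl _, zero_le_one⟩, Fr_nonneg τ 0⟩)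
    (Gr_nonneg τ zero_le_one)

lemma Gr_one (hf : Faithful τ) : Gr τ 1 = 1 := by
  refine le_antisymm (Gr_le_one τ le_rfl) ?_
  refine le_csInf ⟨1, one_mem_Sq τ le_rfl⟩ fun x hx => ?_
  by_contra hlt
  push_neg at hlt
  have h2 := Fr_strictMonoOn τ hf hx.1 ⟨zero_le_one, le_refl _⟩ hlt
  rw [Fr_one] at h2
  exact absurd hx.2 (not_le.2 h2)


section Xi

variable (ν : Measure 𝕀) [IsProbabilityMeasure ν]

/-- The CDF as a self-map of `𝕀`. -/
def Fc : 𝕀 → 𝕀 := fun t => ⟨Fr ν (t:ℝ), Fr_nonneg ν _, Fr_le_one ν _⟩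

/-- The quantile function as a self-map of `𝕀`. -/
def Gc : 𝕀 → 𝕀 := fun u => ⟨Gr ν (u:ℝ), Gr_nonneg ν u.2.2, Gr_le_one ν u.2.2⟩

lemma Fc_mono : Monotone (Fc ν) := fun s t h => Subtype.mk_le_mk.2 (Fr_mono ν h)

lemma Gc_mono : Monotone (Gc ν) := fun u u' h =>
  Subtype.mk_le_mk.2 (Gr_mono ν u'.2.2 h)

lemma Fc_surj (hd : Diffuse ν) : Function.Surjective (Fc ν) := by
  intro v
  obtain ⟨t0, ht0mem, hFt0, -⟩ := exists_Fr_eq ν hd v.2.1 v.2.2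
  exact ⟨⟨t0, ht0mem⟩, Subtype.ext hFt0⟩

lemma Gc_surj (hf : Faithful ν) : Function.Surjective (Gc ν) := fun t =>
  ⟨Fc ν t, Subtype.ext (Gr_Fr ν hf t)⟩

lemma continuous_of_mono_surj {f : 𝕀 → 𝕀} (hm : Monotone f)
    (hs : Function.Surjective f) : Continuous f :=
  hm.continuous_of_denseRange hs.denseRange

end Xi

section Transport

variable (τ σ : Measure 𝕀) [IsProbabilityMeasure τ] [IsProbabilityMeasure σ]

/-- The transport map `ξ = G_τ ∘ F_σ`. -/
def xi : 𝕀 → 𝕀 := fun t => Gc τ (Fc σ t)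

lemma xi_surj (hf : Faithful τ) (hd : Diffuse σ) : Function.Surjective (xi τ σ) :=
  (Gc_surj τ hf).comp (Fc_surj σ hd)

lemma xi_mono : Monotone (xi τ σ) := (Gc_mono τ).comp (Fc_mono σ)

lemma xi_continuous (hf : Faithful τ) (hd : Diffuse σ) : Continuous (xi τ σ) :=
  continuous_of_mono_surj (xi_mono τ σ) (xi_surj τ σ hf hd)

lemma xi_zero (hd : Diffuse σ) : xi τ σ 0 = 0 := by
  apply Subtype.ext
  show Gr τ (Fr σ ((0:𝕀):ℝ)) = ((0:𝕀):ℝ)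
  rw [show ((0:𝕀):ℝ) = 0 from rfl, Fr_zero σ hd, Gr_zero τ]

lemma xi_one (hf : Faithful τ) : xi τ σ 1 = 1 := by
  apply Subtype.ext
  show Gr τ (Fr σ ((1:𝕀):ℝ)) = ((1:𝕀):ℝ)
  rw [show ((1:𝕀):ℝ) = 1 from rfl, Fr_one σ, Gr_one τ hf]

lemma map_xi (hf : Faithful τ) (hd : Diffuse σ) : σ.map (xi τ σ) = τ := by
  refine Measure.ext_of_Iic _ _ (fun t => ?_)
  rw [Measure.map_apply (xi_continuous τ σ hf hd).measurable measurableSet_Iic]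
  have h1 : xi τ σ ⁻¹' Iic t = {s : 𝕀 | Fr σ (s:ℝ) ≤ Fr τ (t:ℝ)} := by
    ext s
    simp only [mem_preimage, mem_Iic, mem_setOf_eq]
    rw [show (xi τ σ s ≤ t ↔ ((xi τ σ s : 𝕀) : ℝ) ≤ ((t:𝕀):ℝ)) from Subtype.coe_le_coe.symm]
    exact Gr_le_iff τ (Fr_le_one σ _) t.2
  obtain ⟨t0, -, -, hmeas⟩ := exists_Fr_eq σ hd (Fr_nonneg τ (t:ℝ)) (Fr_le_one τ _)
  rw [h1, hmeas, ofReal_Fr]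
  congr 1

end Transport

end S12

/-- For a faithful measure τ and a faithful diffuse measure σ on `[0,1]`,
there is a morphism (injective unital *-homomorphism, trace-preserving) from
`⟨Z_{p,q}, τ⟩` into `⟨Z_{p,q}, σ⟩`. -/
theorem statement12 (p q : ℕ) (hp : 1 ≤ p) (hq : 1 ≤ q) (τ σ : Measure 𝕀)
    [IsProbabilityMeasure τ] [IsProbabilityMeasure σ] [τ.Regular] [σ.Regular]
    (hτf : Faithful τ) (hσf : Faithful σ) (hσd : Diffuse σ) :
    ∃ φ : ↥(Zpq p q) →⋆ₐ[ℂ] ↥(Zpq p q), Function.Injective φ ∧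
      ∀ f : ↥(Zpq p q), trInt (p * q) σ ↑(φ f) = trInt (p * q) τ ↑f := by
  classical
  set ξ : 𝕀 → 𝕀 := S12.xi τ σ with hξdef
  have hcont : Continuous ξ := S12.xi_continuous τ σ hτf hσd
  have hsurj : Function.Surjective ξ := S12.xi_surj τ σ hτf hσd
  have hmap : σ.map ξ = τ := S12.map_xi τ σ hτf hσd
  have hξ0 : ξ 0 = 0 := S12.xi_zero τ σ hσd
  have hξ1 : ξ 1 = 1 := S12.xi_one τ σ hτf
  set ξc : C(𝕀, 𝕀) := ⟨ξ, hcont⟩ with hξcdef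
  have key : ∀ g : 𝔸 (p * q), g ∈ Zpq p q → g.comp ξc ∈ Zpq p q := by
    intro g hg
    obtain ⟨hg0, hg1⟩ := hg
    constructor
    · show evalHom (p * q) 0 (g.comp ξc) ∈ (lKron p q).range
      have e0 : evalHom (p * q) 0 (g.comp ξc) = evalHom (p * q) 0 g := by
        show g (ξ 0) = g 0
        rw [hξ0]
      rw [e0]; exact hg0
    · show evalHom (p * q) 1 (g.comp ξc) ∈ (rKron p q).range
      have e1 : evalHom (p * q) 1 (g.comp ξc) = evalHom (p * q) 1 g := by
        show g (ξ 1) = g 1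
        rw [hξ1]
      rw [e1]; exact hg1
  refine ⟨{ toFun := fun f => ⟨(f : 𝔸 (p * q)).comp ξc, key _ f.2⟩
            map_one' := Subtype.ext (ContinuousMap.ext fun t => rfl)
            map_mul' := fun f g => Subtype.ext (ContinuousMap.ext fun t => rfl)
            map_zero' := Subtype.ext (ContinuousMap.ext fun t => rfl)
            map_add' := fun f g => Subtype.ext (ContinuousMap.ext fun t => rfl)
            commutes' := fun c => Subtype.ext (ContinuousMap.ext fun t => rfl)
            map_star' := fun f => Subtype.ext (ContinuousMap.ext fun t => rfl) }, ?_, ?_⟩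
  · intro f g h
    apply Subtype.ext
    apply ContinuousMap.ext
    intro s
    obtain ⟨t, rfl⟩ := hsurj s
    exact congrArg (fun x : ↥(Zpq p q) => (x : 𝔸 (p * q)) t) h
  · intro f
    show trInt (p * q) σ ((f : 𝔸 (p * q)).comp ξc) = trInt (p * q) τ (f : 𝔸 (p * q))
    have hms : AEStronglyMeasurable
        (fun s : 𝕀 => ((f : 𝔸 (p * q)) s).trace / ((p * q : ℕ) : ℂ)) (σ.map ξ) :=
      (((f : 𝔸 (p * q)).continuous.matrix_trace).div_const _).aestronglyMeasurable
    calc trInt (p * q) σ ((f : 𝔸 (p * q)).comp ξc)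
        = ∫ t, ((f : 𝔸 (p * q)) (ξ t)).trace / ((p * q : ℕ) : ℂ) ∂σ := rfl
      _ = ∫ s, ((f : 𝔸 (p * q)) s).trace / ((p * q : ℕ) : ℂ) ∂(σ.map ξ) :=
          (MeasureTheory.integral_map hcont.aemeasurable hms).symm
      _ = trInt (p * q) τ (f : 𝔸 (p * q)) := by rw [hmap]; rfl
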